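/- Let h₀, h₂ > 0 with h₀ ≤ h₂, let φ > 0 and c ≥ 0. Let H : [0,∞) → ℝ^{N×N} take values in the real symmetric matrices and satisfy, for all t ≥ 0 and all v ∈ ℝᴺ, vᵀH(t)v ≥ h₀‖v‖² and ‖H(t)v‖ ≤ h₂‖v‖. Let ē : [0,∞) → ℝᴺ satisfy ‖ē(t)‖ ≤ c for all t ≥ 0, and let Ǎ : [0,∞) → ℝᴺ be differentiable with Ǎ'(t) = -φ·H(t)·(Ǎ(t) + ē(t)) for all t ≥ 0. Then limsup_{t→∞} ‖Ǎ(t)‖ ≤ (h₂/h₀)·c; in particular Ǎ is uniformly ultimately bounded with a bound depending only on h₀, h₂ and c. -/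

import Mathlib

open scoped Matrix

set_option maxHeartbeats 1000000

/-- Analytic core of Lemma 7: if `Ǎ' = -φ·H(t)(Ǎ + ē)` where the symmetric matrices `H(t)`
satisfy `vᵀH(t)v ≥ h₀‖v‖²` and `‖H(t)v‖ ≤ h₂‖v‖`, `φ > 0`, and `‖ē(t)‖ ≤ c`, then
`limsup_{t→∞} ‖Ǎ(t)‖ ≤ (h₂/h₀)·c`; in particular `Ǎ` is uniformly ultimately bounded
with a bound depending only on `h₀, h₂, c`. -/
theorem adaptive_estimator_uub (N : ℕ) (h₀ h₂ φ c : ℝ)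
    (hh₀ : 0 < h₀) (hh₂ : 0 < h₂) (hle : h₀ ≤ h₂) (hφ : 0 < φ) (hc : 0 ≤ c)
    (H : ℝ → Matrix (Fin N) (Fin N) ℝ)
    (hHsymm : ∀ t, 0 ≤ t → (H t).IsSymm)
    (hHlower : ∀ t, 0 ≤ t → ∀ v : EuclideanSpace ℝ (Fin N),
      h₀ * ‖v‖ ^ 2 ≤ (inner ℝ v (Matrix.toEuclideanLin (H t) v) : ℝ))
    (hHupper : ∀ t, 0 ≤ t → ∀ v : EuclideanSpace ℝ (Fin N),
      ‖Matrix.toEuclideanLin (H t) v‖ ≤ h₂ * ‖v‖)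
    (ebar Acheck : ℝ → EuclideanSpace ℝ (Fin N))
    (hebar : ∀ t, 0 ≤ t → ‖ebar t‖ ≤ c)
    (hderiv : ∀ t, 0 ≤ t → HasDerivAt Acheck
      (-φ • Matrix.toEuclideanLin (H t) (Acheck t + ebar t)) t) :
    Filter.limsup (fun t => ‖Acheck t‖) Filter.atTop ≤ (h₂ / h₀) * c ∧
      ∃ b : ℝ, b ≤ (h₂ / h₀) * c + 1 ∧ ∃ T : ℝ, 0 ≤ T ∧ ∀ t ≥ T, ‖Acheck t‖ ≤ b := by
  classical
  set r : ℝ := h₂ / h₀ * c with hr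
  have hr0 : 0 ≤ r := by positivity
  set K : ℝ := φ * h₀ with hK
  have hK0 : 0 < K := by positivity
  set g : ℝ → ℝ := fun t => ‖Acheck t‖ ^ 2 with hgdef
  set A' : ℝ → EuclideanSpace ℝ (Fin N) :=
    fun t => -φ • Matrix.toEuclideanLin (H t) (Acheck t + ebar t) with hA'
  -- derivative of g
  have hg : ∀ t, 0 ≤ t →
      HasDerivAt g ((inner ℝ (Acheck t) (A' t) : ℝ) + inner ℝ (A' t) (Acheck t)) t := by
    intro t ht
    have h1 := HasDerivAt.inner ℝ (hderiv t ht) (hderiv t ht)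
    have heq : (fun s => (inner ℝ (Acheck s) (Acheck s) : ℝ)) = g := by
      funext s
      exact real_inner_self_eq_norm_sq _
    rw [heq] at h1
    exact h1
  -- key differential inequality
  have hkey : ∀ t, 0 ≤ t →
      (inner ℝ (Acheck t) (A' t) : ℝ) + inner ℝ (A' t) (Acheck t) + K * (g t - r ^ 2) ≤ 0 := by
    intro t ht
    have hsym : (inner ℝ (A' t) (Acheck t) : ℝ) = inner ℝ (Acheck t) (A' t) :=
      real_inner_comm _ _
    rw [hsym]
    have hinner : (inner ℝ (Acheck t) (A' t) : ℝ) =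
        -φ * ((inner ℝ (Acheck t) (Matrix.toEuclideanLin (H t) (Acheck t)) : ℝ)
          + inner ℝ (Acheck t) (Matrix.toEuclideanLin (H t) (ebar t))) := by
      simp [A', inner_smul_right, map_add, inner_add_right, mul_add]
    have hlow := hHlower t ht (Acheck t)
    have habs : |(inner ℝ (Acheck t) (Matrix.toEuclideanLin (H t) (ebar t)) : ℝ)| ≤
        ‖Acheck t‖ * (h₂ * c) := by
      refine (abs_real_inner_le_norm _ _).trans ?_
      have h1 := hHupper t ht (ebar t)
      have h2 := hebar t ht
      have : ‖Matrix.toEuclideanLin (H t) (ebar t)‖ ≤ h₂ * c := by nlinarith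
      exact mul_le_mul_of_nonneg_left this (norm_nonneg _)
    have hcross : -(‖Acheck t‖ * (h₂ * c)) ≤
        (inner ℝ (Acheck t) (Matrix.toEuclideanLin (H t) (ebar t)) : ℝ) :=
      neg_le_of_abs_le habs
    have hg_eq : g t = ‖Acheck t‖ ^ 2 := rfl
    rw [hinner, hg_eq]
    set a : ℝ := ‖Acheck t‖ with ha
    set P : ℝ := inner ℝ (Acheck t) (Matrix.toEuclideanLin (H t) (Acheck t)) with hP
    set Q : ℝ := inner ℝ (Acheck t) (Matrix.toEuclideanLin (H t) (ebar t)) with hQ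
    have ha0 : 0 ≤ a := norm_nonneg _
    have hrk : h₀ * r = h₂ * c := by
      rw [hr]; field_simp
    rw [← hrk] at hcross
    have hint1 : 0 ≤ φ * h₀ * (a - r) ^ 2 := by positivity
    have hint2 : φ * (h₀ * a ^ 2) ≤ φ * P := mul_le_mul_of_nonneg_left hlow hφ.le
    have hint3 : φ * (-(a * (h₀ * r))) ≤ φ * Q := mul_le_mul_of_nonneg_left hcross hφ.le
    have hKdef : K = φ * h₀ := hK
    rw [hKdef]
    nlinarith [hint1, hint2, hint3]
  -- Lyapunov comparison: F t := exp(K t) * (g t - r²) is antitone on [0,∞)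
  set F : ℝ → ℝ := fun t => Real.exp (K * t) * (g t - r ^ 2) with hF
  have hFd : ∀ t, 0 ≤ t → HasDerivAt F
      (Real.exp (K * t) *
        ((inner ℝ (Acheck t) (A' t) : ℝ) + inner ℝ (A' t) (Acheck t) + K * (g t - r ^ 2))) t := by
    intro t ht
    have he : HasDerivAt (fun s => Real.exp (K * s)) (K * Real.exp (K * t)) t := by
      simpa [mul_comm] using ((hasDerivAt_id t).const_mul K).exp
    have hgd : HasDerivAt (fun s => g s - r ^ 2)
        ((inner ℝ (Acheck t) (A' t) : ℝ) + inner ℝ (A' t) (Acheck t)) t :=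
      (hg t ht).sub_const _
    have := he.mul hgd
    refine this.congr_deriv ?_
    ring
  have hanti : AntitoneOn F (Set.Ici (0 : ℝ)) := by
    apply antitoneOn_of_deriv_nonpos (convex_Ici 0)
    · intro x hx
      exact (hFd x hx).continuousAt.continuousWithinAt
    · rw [interior_Ici]
      intro x hx
      exact (hFd x (le_of_lt hx)).differentiableAt.differentiableWithinAt
    · rw [interior_Ici]
      intro x hx
      rw [(hFd x (le_of_lt hx)).deriv]
      have := hkey x (le_of_lt hx)
      have hexp : 0 < Real.exp (K * x) := Real.exp_pos _
      nlinarith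
  set C : ℝ := max (g 0 - r ^ 2) 0 with hC
  have hC0 : 0 ≤ C := le_max_right _ _
  have hgbound : ∀ t, 0 ≤ t → g t ≤ r ^ 2 + C * Real.exp (-(K * t)) := by
    intro t ht
    have h1 : F t ≤ F 0 := hanti (Set.self_mem_Ici) ht ht
    have h2 : F 0 = g 0 - r ^ 2 := by simp [F]
    have h3 : Real.exp (K * t) * (g t - r ^ 2) ≤ C := by
      rw [hF] at h1; simp only at h1
      calc Real.exp (K * t) * (g t - r ^ 2) ≤ g 0 - r ^ 2 := by rw [← h2]; exact h1
        _ ≤ C := le_max_left _ _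
    have hexp : 0 < Real.exp (K * t) := Real.exp_pos _
    have := mul_le_mul_of_nonneg_left h3 (Real.exp_pos (-(K * t))).le
    rw [← mul_assoc, ← Real.exp_add] at this
    simp only [neg_add_cancel, Real.exp_zero, one_mul] at this
    linarith
  -- eventual bound
  have hev : ∀ ε : ℝ, 0 < ε → ∀ᶠ t in Filter.atTop, ‖Acheck t‖ ≤ r + ε := by
    intro ε hε
    have hδ : (0 : ℝ) < 2 * r * ε + ε ^ 2 := by positivity
    have htend : Filter.Tendsto (fun t : ℝ => C * Real.exp (-(K * t)))
        Filter.atTop (nhds 0) := by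
      have h1 : Filter.Tendsto (fun t : ℝ => -(K * t)) Filter.atTop Filter.atBot := by
        apply Filter.tendsto_neg_atBot_iff.mpr
        exact Filter.Tendsto.const_mul_atTop hK0 Filter.tendsto_id
      have h2 := Real.tendsto_exp_atBot.comp h1
      have := h2.const_mul C
      simpa using this
    have h3 : ∀ᶠ t in Filter.atTop, C * Real.exp (-(K * t)) < 2 * r * ε + ε ^ 2 :=
      htend.eventually (gt_mem_nhds hδ)
    filter_upwards [h3, Filter.eventually_ge_atTop (0 : ℝ)] with t ht1 ht0
    have hgt := hgbound t ht0
    have hsq : ‖Acheck t‖ ^ 2 ≤ (r + ε) ^ 2 := by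
      have : g t = ‖Acheck t‖ ^ 2 := rfl
      nlinarith
    nlinarith [norm_nonneg (Acheck t)]
  constructor
  · -- limsup bound
    have hco : Filter.IsCoboundedUnder (· ≤ ·) Filter.atTop (fun t => ‖Acheck t‖) :=
      Filter.isCoboundedUnder_le_of_le Filter.atTop (fun i => norm_nonneg _)
    refine le_of_forall_pos_le_add ?_
    intro ε hε
    exact Filter.limsup_le_of_le hco (hev ε hε)
  · -- UUB
    refine ⟨r + 1, le_refl _, ?_⟩
    obtain ⟨T₀, hT₀⟩ := Filter.eventually_atTop.mp (hev 1 one_pos)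
    exact ⟨max T₀ 0, le_max_right _ _, fun t ht => hT₀ t ((le_max_left _ _).trans ht)⟩
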